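/- Let T > 0, let s : ℝⁿ × ℝˡ → ℝᵐ be continuously differentiable, let x₀ ∈ ℝⁿ, and let z, g : [0, T] → ℝⁿ be continuous. Define x(t) = x₀ + ∫₀ᵗ z(τ) dτ and ω(z, c) = (1/2) ∫₀ᵀ ‖s(x(t), c)‖² dt. Then for every c ∈ ℝˡ and every direction (g, γ) with γ ∈ ℝˡ, lim_{α → 0⁺} ( ω(z + α g, c + α γ) − ω(z, c) ) / α = ∫₀ᵀ ⟨ Σ_{i=1}^{m} ∫_t^T s_i(x(τ), c) ∇ₓ s_i(x(τ), c) dτ , g(t) ⟩ dt + ⟨ Σ_{i=1}^{m} ∫₀ᵀ s_i(x(t), c) ∇_c s_i(x(t), c) dt , γ ⟩. -/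

import Mathlib

open MeasureTheory Filter intervalIntegral

theorem aux_clm (n l : ℕ) (L : (Fin n → ℝ) × (Fin l → ℝ) →L[ℝ] ℝ) (u : Fin n → ℝ) (v : Fin l → ℝ) :
    L (u, v) = ∑ j, u j * L (Pi.single j 1, 0) + ∑ k, v k * L (0, Pi.single k 1) := by
  have husum : ∑ j, u j • (Pi.single j 1 : Fin n → ℝ) = u := by
    funext a; simp [Finset.sum_apply, Pi.single_apply]
  have hvsum : ∑ k, v k • (Pi.single k 1 : Fin l → ℝ) = v := by
    funext a; simp [Finset.sum_apply, Pi.single_apply]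
  have hu : ((u, (0 : Fin l → ℝ)) : (Fin n → ℝ) × (Fin l → ℝ))
      = ∑ j, u j • (((Pi.single j 1 : Fin n → ℝ), (0 : Fin l → ℝ)) : (Fin n → ℝ) × (Fin l → ℝ)) := by
    rw [Prod.ext_iff]
    constructor
    · rw [Prod.fst_sum]; simp [husum]
    · rw [Prod.snd_sum]; simp
  have hv : (((0 : Fin n → ℝ), v) : (Fin n → ℝ) × (Fin l → ℝ))
      = ∑ k, v k • (((0 : Fin n → ℝ), (Pi.single k 1 : Fin l → ℝ)) : (Fin n → ℝ) × (Fin l → ℝ)) := by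
    rw [Prod.ext_iff]
    constructor
    · rw [Prod.fst_sum]; simp
    · rw [Prod.snd_sum]; simp [hvsum]
  have h0 : ((u, v) : (Fin n → ℝ) × (Fin l → ℝ)) = (u, 0) + (0, v) := by simp
  rw [h0, map_add, hu, hv, map_sum, map_sum]
  simp only [_root_.map_smul, smul_eq_mul]

/-- Gâteaux derivative of the surface-penalty functional
`ω(z, c) = (1/2)∫₀ᵀ ‖s(x(t), c)‖² dt`, where `x(t) = x₀ + ∫₀ᵗ z`, at `(z, c)` in the
direction `(g, γ)`:
`∫₀ᵀ ⟨Σᵢ ∫ₜᵀ sᵢ(x(τ),c) ∇ₓsᵢ(x(τ),c) dτ, g(t)⟩ dt + ⟨Σᵢ ∫₀ᵀ sᵢ(x(t),c) ∇_c sᵢ(x(t),c) dt, γ⟩`. -/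
theorem gateaux_derivative_of_omega (n l m : ℕ) (T : ℝ) (hT : 0 < T)
    (s : (Fin n → ℝ) → (Fin l → ℝ) → Fin m → ℝ)
    (hs : ContDiff ℝ 1 (fun p : (Fin n → ℝ) × (Fin l → ℝ) => s p.1 p.2))
    (x₀ : Fin n → ℝ) (z g : ℝ → Fin n → ℝ)
    (hz : ContinuousOn z (Set.Icc 0 T)) (hg : ContinuousOn g (Set.Icc 0 T))
    (x : ℝ → Fin n → ℝ) (hx : ∀ t, x t = x₀ + ∫ τ in (0:ℝ)..t, z τ)
    (gradx : (Fin n → ℝ) → (Fin l → ℝ) → Fin m → Fin n → ℝ)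
    (hgradx : ∀ y c i j, gradx y c i j = fderiv ℝ (fun y' => s y' c i) y (Pi.single j 1))
    (gradc : (Fin n → ℝ) → (Fin l → ℝ) → Fin m → Fin l → ℝ)
    (hgradc : ∀ y c i k, gradc y c i k = fderiv ℝ (fun c' => s y c' i) c (Pi.single k 1))
    (ω : (ℝ → Fin n → ℝ) → (Fin l → ℝ) → ℝ)
    (hω : ∀ w c, ω w c =
      (1 / 2) * ∫ t in (0:ℝ)..T, ∑ i, (s (x₀ + ∫ τ in (0:ℝ)..t, w τ) c i) ^ 2)
    (c γ : Fin l → ℝ) :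
    Tendsto (fun α => (ω (fun t => z t + α • g t) (c + α • γ) - ω z c) / α)
      (nhdsWithin 0 (Set.Ioi 0))
      (nhds ((∫ t in (0:ℝ)..T,
          ∑ j, (∑ i, ∫ τ in t..T, s (x τ) c i * gradx (x τ) c i j) * g t j)
        + ∑ k, (∑ i, ∫ t in (0:ℝ)..T, s (x t) c i * gradc (x t) c i k) * γ k)) := by
  classical
  have hT' : (0:ℝ) ≤ T := hT.le
  have huIcc : Set.uIcc (0:ℝ) T = Set.Icc 0 T := Set.uIcc_of_le hT'
  have huIoc : Set.uIoc (0:ℝ) T = Set.Ioc 0 T := Set.uIoc_of_le hT'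
  set G : ℝ → Fin n → ℝ := fun t => ∫ τ in (0:ℝ)..t, g τ with hGdef
  -- integrability of z, g on subintervals
  have hsub : ∀ t ∈ Set.Icc (0:ℝ) T, Set.uIcc (0:ℝ) t ⊆ Set.Icc 0 T := by
    intro t ht
    rw [Set.uIcc_of_le ht.1]
    exact Set.Icc_subset_Icc le_rfl ht.2
  have hzI : ∀ t ∈ Set.Icc (0:ℝ) T, IntervalIntegrable z volume 0 t :=
    fun t ht => (hz.mono (hsub t ht)).intervalIntegrable
  have hgI : ∀ t ∈ Set.Icc (0:ℝ) T, IntervalIntegrable g volume 0 t :=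
    fun t ht => (hg.mono (hsub t ht)).intervalIntegrable
  -- continuity of x and G on Icc
  have hprim : ∀ (f : ℝ → Fin n → ℝ), ContinuousOn f (Set.Icc 0 T) →
      ContinuousOn (fun t => ∫ τ in (0:ℝ)..t, f τ) (Set.Icc 0 T) := by
    intro f hf
    have := continuousOn_primitive_interval (a := (0:ℝ)) (b := T) (f := f) (μ := volume)
      (by rw [huIcc]; exact hf.integrableOn_Icc)
    rwa [huIcc] at this
  have hxc : ContinuousOn x (Set.Icc 0 T) :=
    (continuousOn_const.add (hprim z hz)).congr (fun t _ => hx t)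
  have hGc : ContinuousOn G (Set.Icc 0 T) := hprim g hg
  -- componentwise smoothness / derivative data
  have hsi : ∀ i : Fin m, ContDiff ℝ 1 (fun p : (Fin n → ℝ) × (Fin l → ℝ) => s p.1 p.2 i) :=
    fun i => (ContinuousLinearMap.proj (R := ℝ) (φ := fun _ : Fin m => ℝ) i).contDiff.comp hs
  set D : ((Fin n → ℝ) × (Fin l → ℝ)) → Fin m → ((Fin n → ℝ) × (Fin l → ℝ)) →L[ℝ] ℝ :=
    fun p i => fderiv ℝ (fun q : (Fin n → ℝ) × (Fin l → ℝ) => s q.1 q.2 i) p with hDdef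
  have hDc : ∀ i, Continuous fun p => D p i := fun i => (hsi i).continuous_fderiv one_ne_zero
  have hDd : ∀ (i) (p : (Fin n → ℝ) × (Fin l → ℝ)),
      HasFDerivAt (fun q : (Fin n → ℝ) × (Fin l → ℝ) => s q.1 q.2 i) (D p i) p :=
    fun i p => (((hsi i).differentiable one_ne_zero) p).hasFDerivAt
  -- partial derivative identities
  have hgradx' : ∀ (y : Fin n → ℝ) (d : Fin l → ℝ) i j,
      gradx y d i j = D (y, d) i (Pi.single j 1, 0) := by
    intro y d i j
    rw [hgradx]
    have h1 : HasFDerivAt (fun y' => s y' d i)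
        ((D (y, d) i).comp (ContinuousLinearMap.inl ℝ (Fin n → ℝ) (Fin l → ℝ))) y :=
      by have h2 := (hDd i (y, d)).comp y (hasFDerivAt_prodMk_left (𝕜 := ℝ) y d); exact h2
    rw [h1.fderiv]; rfl
  have hgradc' : ∀ (y : Fin n → ℝ) (d : Fin l → ℝ) i k,
      gradc y d i k = D (y, d) i (0, Pi.single k 1) := by
    intro y d i k
    rw [hgradc]
    have h1 : HasFDerivAt (fun d' => s y d' i)
        ((D (y, d) i).comp (ContinuousLinearMap.inr ℝ (Fin n → ℝ) (Fin l → ℝ))) d :=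
      (hDd i (y, d)).comp d (hasFDerivAt_prodMk_right y d)
    rw [h1.fderiv]; rfl
  have hDexp : ∀ (y : Fin n → ℝ) (d : Fin l → ℝ) (i) (u : Fin n → ℝ) (v : Fin l → ℝ),
      D (y, d) i (u, v) = ∑ j, u j * gradx y d i j + ∑ k, v k * gradc y d i k := by
    intro y d i u v
    rw [aux_clm n l (D (y, d) i) u v]
    simp only [hgradx', hgradc']
  -- pointwise derivative in α
  have key : ∀ (t α : ℝ), HasDerivAt
      (fun β : ℝ => (1/2) * ∑ i, (s (x t + β • G t) (c + β • γ) i)^2)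
      (∑ i, s (x t + α • G t) (c + α • γ) i * D (x t + α • G t, c + α • γ) i (G t, γ)) α := by
    intro t α
    have hc1 : HasDerivAt (fun β : ℝ => x t + β • G t) (G t) α := by
      simpa using ((hasDerivAt_id α).smul_const (G t)).const_add (x t)
    have hc2 : HasDerivAt (fun β : ℝ => c + β • γ) γ α := by
      simpa using ((hasDerivAt_id α).smul_const γ).const_add c
    have hκ : HasDerivAt (fun β : ℝ => (x t + β • G t, c + β • γ)) (G t, γ) α := hc1.prodMk hc2
    have hterm : ∀ i : Fin m, HasDerivAt (fun β : ℝ => (s (x t + β • G t) (c + β • γ) i)^2)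
        (2 * s (x t + α • G t) (c + α • γ) i
          * D (x t + α • G t, c + α • γ) i (G t, γ)) α := by
      intro i
      have hcomp := (hDd i (x t + α • G t, c + α • γ)).comp_hasDerivAt α hκ
      simpa [pow_one] using hcomp.fun_pow 2
    have hsum := HasDerivAt.fun_sum (u := Finset.univ) (fun i _ => hterm i)
    have hmul := hsum.const_mul (1/2 : ℝ)
    refine hmul.congr_deriv ?_
    rw [Finset.mul_sum]
    exact Finset.sum_congr rfl fun i _ => by ring
  -- uniform bound on a compact rectangle
  set K : Set (ℝ × ℝ) := (Set.Icc (0:ℝ) T) ×ˢ (Set.Icc (-1:ℝ) 1) with hKdef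
  set B : ℝ × ℝ → ℝ := fun q =>
    ∑ i, s (x q.1 + q.2 • G q.1) (c + q.2 • γ) i
      * D (x q.1 + q.2 • G q.1, c + q.2 • γ) i (G q.1, γ) with hBdef
  have hKcomp : IsCompact K := isCompact_Icc.prod isCompact_Icc
  have hfst : ContinuousOn (fun q : ℝ × ℝ => q.1) K := continuous_fst.continuousOn
  have hmapsto : ∀ q ∈ K, (q : ℝ × ℝ).1 ∈ Set.Icc (0:ℝ) T := fun q hq => hq.1
  have hxq : ContinuousOn (fun q : ℝ × ℝ => x q.1) K := hxc.comp hfst hmapsto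
  have hGq : ContinuousOn (fun q : ℝ × ℝ => G q.1) K := hGc.comp hfst hmapsto
  have hptq : ContinuousOn (fun q : ℝ × ℝ =>
      ((x q.1 + q.2 • G q.1, c + q.2 • γ) : (Fin n → ℝ) × (Fin l → ℝ))) K :=
    (hxq.add (continuous_snd.continuousOn.smul hGq)).prodMk
      (continuousOn_const.add (continuous_snd.continuousOn.smul continuousOn_const))
  have hGγq : ContinuousOn (fun q : ℝ × ℝ => ((G q.1, γ) : (Fin n → ℝ) × (Fin l → ℝ))) K :=
    hGq.prodMk continuousOn_const
  have hBc : ContinuousOn B K := by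
    apply continuousOn_finset_sum
    intro i _
    exact (((continuous_apply i).comp hs.continuous).comp_continuousOn hptq).mul
      (((hDc i).comp_continuousOn hptq).clm_apply hGγq)
  obtain ⟨C, hC⟩ := hKcomp.exists_bound_of_continuousOn hBc
  -- measurability and integrability helpers
  have haes : ∀ (f : ℝ → ℝ), ContinuousOn f (Set.Icc 0 T) →
      AEStronglyMeasurable f (volume.restrict (Set.uIoc (0:ℝ) T)) := by
    intro f hf
    rw [huIoc]
    exact (hf.mono Set.Ioc_subset_Icc_self).aestronglyMeasurable measurableSet_Ioc
  have hII : ∀ (f : ℝ → ℝ), ContinuousOn f (Set.Icc 0 T) → IntervalIntegrable f volume 0 T := by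
    intro f hf
    apply ContinuousOn.intervalIntegrable
    rwa [huIcc]
  have hptα : ∀ α : ℝ, ContinuousOn (fun t => ((x t + α • G t, c + α • γ) :
      (Fin n → ℝ) × (Fin l → ℝ))) (Set.Icc 0 T) := fun α =>
    (hxc.add (hGc.const_smul α)).prodMk continuousOn_const
  have hcontF : ∀ α : ℝ, ContinuousOn
      (fun t => (1/2) * ∑ i, (s (x t + α • G t) (c + α • γ) i)^2) (Set.Icc 0 T) := by
    intro α
    apply continuousOn_const.mul
    apply continuousOn_finset_sum
    intro i _
    exact (((continuous_apply i).comp hs.continuous).comp_continuousOn (hptα α)).pow 2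
  have hcontF' : ∀ α : ℝ, ContinuousOn
      (fun t => ∑ i, s (x t + α • G t) (c + α • γ) i
        * D (x t + α • G t, c + α • γ) i (G t, γ)) (Set.Icc 0 T) := by
    intro α
    apply continuousOn_finset_sum
    intro i _
    exact (((continuous_apply i).comp hs.continuous).comp_continuousOn (hptα α)).mul
      (((hDc i).comp_continuousOn (hptα α)).clm_apply (hGc.prodMk continuousOn_const))
  -- differentiation under the integral sign
  have main0 := intervalIntegral.hasDerivAt_integral_of_dominated_loc_of_deriv_le
    (𝕜 := ℝ) (μ := volume) (a := 0) (b := T)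
    (F := fun α t => (1/2) * ∑ i, (s (x t + α • G t) (c + α • γ) i)^2)
    (F' := fun α t => ∑ i, s (x t + α • G t) (c + α • γ) i
        * D (x t + α • G t, c + α • γ) i (G t, γ))
    (x₀ := 0) (bound := fun _ => C) (s := Metric.ball 0 1) (Metric.ball_mem_nhds 0 one_pos)
    (Eventually.of_forall fun α => haes _ (hcontF α))
    (hII _ (hcontF 0))
    (haes _ (hcontF' 0))
    (Eventually.of_forall fun t ht α hα => by
      have ht' : t ∈ Set.Icc (0:ℝ) T := by
        rw [huIoc] at ht; exact Set.Ioc_subset_Icc_self ht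
      have hα' : α ∈ Set.Icc (-1:ℝ) 1 := by
        have := Metric.mem_ball.mp hα
        rw [Real.dist_eq, sub_zero] at this
        exact Set.mem_Icc.mpr (abs_le.mp this.le)
      exact hC (t, α) (Set.mem_prod.mpr ⟨ht', hα'⟩))
    intervalIntegrable_const
    (Eventually.of_forall fun t _ α _ => key t α)
  have main : HasDerivAt
      (fun α : ℝ => ∫ t in (0:ℝ)..T, (1/2) * ∑ i, (s (x t + α • G t) (c + α • γ) i)^2)
      (∫ t in (0:ℝ)..T, ∑ i, s (x t) c i * D (x t, c) i (G t, γ)) 0 := by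
    have := main0.2
    simpa only [zero_smul, add_zero] using this
  -- rewriting ω along the perturbed trajectory
  have ωid : ∀ α : ℝ, ω (fun t => z t + α • g t) (c + α • γ)
      = ∫ t in (0:ℝ)..T, (1/2) * ∑ i, (s (x t + α • G t) (c + α • γ) i)^2 := by
    intro α
    rw [hω, ← intervalIntegral.integral_const_mul]
    apply intervalIntegral.integral_congr
    intro t ht
    rw [huIcc] at ht
    have hint : (∫ τ in (0:ℝ)..t, (z τ + α • g τ)) = (∫ τ in (0:ℝ)..t, z τ) + α • G t := by
      have h1 := intervalIntegral.integral_add (hzI t ht) ((hgI t ht).smul α)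
      simpa [intervalIntegral.integral_smul] using h1
    simp only [hint, hx t, add_assoc]
  have ωz : ω z c = ∫ t in (0:ℝ)..T, (1/2) * ∑ i, (s (x t) c i)^2 := by
    have := ωid 0
    simpa only [zero_smul, add_zero] using this
  -- auxiliary scalar functions
  set hh : Fin n → ℝ → ℝ := fun j t => ∑ i, s (x t) c i * gradx (x t) c i j with hhdef
  set qq : Fin l → ℝ → ℝ := fun k t => ∑ i, s (x t) c i * gradc (x t) c i k with qqdef
  set HH : Fin n → ℝ → ℝ := fun j t => ∫ τ in t..T, hh j τ with HHdef
  set Gj : Fin n → ℝ → ℝ := fun j t => ∫ τ in (0:ℝ)..t, g τ j with Gjdef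
  have hptx : ContinuousOn (fun t => ((x t, c) : (Fin n → ℝ) × (Fin l → ℝ))) (Set.Icc 0 T) :=
    hxc.prodMk continuousOn_const
  have hsxc : ∀ i, ContinuousOn (fun t => s (x t) c i) (Set.Icc 0 T) :=
    fun i => ((continuous_apply i).comp hs.continuous).comp_continuousOn hptx
  have hhc : ∀ j, ContinuousOn (hh j) (Set.Icc 0 T) := by
    intro j
    apply continuousOn_finset_sum
    intro i _
    refine (hsxc i).mul ?_
    have : ContinuousOn (fun t => D (x t, c) i (Pi.single j 1, 0)) (Set.Icc 0 T) :=
      ((hDc i).comp_continuousOn hptx).clm_apply continuousOn_const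
    exact this.congr (fun t _ => (hgradx' (x t) c i j))
  have hqc : ∀ k, ContinuousOn (qq k) (Set.Icc 0 T) := by
    intro k
    apply continuousOn_finset_sum
    intro i _
    refine (hsxc i).mul ?_
    have : ContinuousOn (fun t => D (x t, c) i (0, Pi.single k 1)) (Set.Icc 0 T) :=
      ((hDc i).comp_continuousOn hptx).clm_apply continuousOn_const
    exact this.congr (fun t _ => (hgradc' (x t) c i k))
  have hgjc : ∀ j, ContinuousOn (fun t => g t j) (Set.Icc 0 T) :=
    fun j => (continuous_apply j).comp_continuousOn hg
  have hHc : ∀ j, ContinuousOn (HH j) (Set.Icc 0 T) := by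
    intro j
    have := continuousOn_primitive_interval_left (a := (0:ℝ)) (b := T) (f := hh j) (μ := volume)
      (by rw [huIcc]; exact (hhc j).integrableOn_Icc)
    rwa [huIcc] at this
  have hGjc : ∀ j, ContinuousOn (Gj j) (Set.Icc 0 T) := by
    intro j
    have := continuousOn_primitive_interval (a := (0:ℝ)) (b := T) (f := fun t => g t j)
      (μ := volume) (by rw [huIcc]; exact (hgjc j).integrableOn_Icc)
    rwa [huIcc] at this
  have hGapp : ∀ (j : Fin n), ∀ t ∈ Set.Icc (0:ℝ) T, G t j = Gj j t := by
    intro j t ht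
    have := (ContinuousLinearMap.proj (R := ℝ) (φ := fun _ : Fin n => ℝ) j).intervalIntegral_comp_comm
      (hgI t ht)
    exact this.symm
  -- integration by parts
  have hparts : ∀ j : Fin n, (∫ t in (0:ℝ)..T, hh j t * Gj j t)
      = ∫ t in (0:ℝ)..T, HH j t * g t j := by
    intro j
    have hucont : ContinuousOn (fun t => HH j t * Gj j t) (Set.Icc 0 T) := (hHc j).mul (hGjc j)
    have hderiv : ∀ t ∈ Set.Ioo (0:ℝ) T, HasDerivWithinAt (fun t => HH j t * Gj j t)
        (-(hh j t) * Gj j t + HH j t * g t j) (Set.Ioi t) t := by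
      intro t ht
      have htmem : Set.Icc (0:ℝ) T ∈ nhds t := Icc_mem_nhds ht.1 ht.2
      have htIcc : t ∈ Set.Icc (0:ℝ) T := ⟨ht.1.le, ht.2.le⟩
      have hcth : ContinuousAt (hh j) t := (hhc j).continuousAt htmem
      have hctg : ContinuousAt (fun τ => g τ j) t := (hgjc j).continuousAt htmem
      have hih : IntervalIntegrable (hh j) volume t T := by
        apply ContinuousOn.intervalIntegrable
        apply (hhc j).mono
        rw [Set.uIcc_of_le ht.2.le]
        exact Set.Icc_subset_Icc ht.1.le le_rfl
      have hig : IntervalIntegrable (fun τ => g τ j) volume 0 t := by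
        apply ContinuousOn.intervalIntegrable
        exact (hgjc j).mono (hsub t htIcc)
      have hmeash : StronglyMeasurableAtFilter (hh j) (nhds t) volume :=
        ⟨Set.Icc 0 T, htmem, (hhc j).aestronglyMeasurable measurableSet_Icc⟩
      have hmeasg : StronglyMeasurableAtFilter (fun τ => g τ j) (nhds t) volume :=
        ⟨Set.Icc 0 T, htmem, (hgjc j).aestronglyMeasurable measurableSet_Icc⟩
      have hH' : HasDerivAt (HH j) (-(hh j t)) t :=
        intervalIntegral.integral_hasDerivAt_left hih hmeash hcth
      have hG' : HasDerivAt (Gj j) (g t j) t :=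
        intervalIntegral.integral_hasDerivAt_right hig hmeasg hctg
      exact (hH'.mul hG').hasDerivWithinAt
    have hint1 : IntervalIntegrable (fun t => -(hh j t) * Gj j t) volume 0 T :=
      hII _ (((hhc j).neg).mul (hGjc j))
    have hint2 : IntervalIntegrable (fun t => HH j t * g t j) volume 0 T :=
      hII _ ((hHc j).mul (hgjc j))
    have hftc := intervalIntegral.integral_eq_sub_of_hasDeriv_right_of_le hT' hucont hderiv
      (hint1.add hint2)
    have hHT : HH j T = 0 := intervalIntegral.integral_same
    have hGj0 : Gj j 0 = 0 := intervalIntegral.integral_same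
    rw [intervalIntegral.integral_add hint1 hint2, hHT, hGj0] at hftc
    have hneg : (∫ t in (0:ℝ)..T, -(hh j t) * Gj j t) = -∫ t in (0:ℝ)..T, hh j t * Gj j t := by
      rw [← intervalIntegral.integral_neg]
      apply intervalIntegral.integral_congr
      intro t _
      ring
    rw [hneg] at hftc
    simp only [zero_mul, mul_zero, sub_zero] at hftc
    linarith
  -- continuity of the gradient coefficients
  have hgradxc : ∀ i j, ContinuousOn (fun t => gradx (x t) c i j) (Set.Icc 0 T) := by
    intro i j
    have : ContinuousOn (fun t => D (x t, c) i (Pi.single j 1, 0)) (Set.Icc 0 T) :=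
      ((hDc i).comp_continuousOn hptx).clm_apply continuousOn_const
    exact this.congr (fun t _ => (hgradx' (x t) c i j))
  have hgradcc : ∀ i k, ContinuousOn (fun t => gradc (x t) c i k) (Set.Icc 0 T) := by
    intro i k
    have : ContinuousOn (fun t => D (x t, c) i (0, Pi.single k 1)) (Set.Icc 0 T) :=
      ((hDc i).comp_continuousOn hptx).clm_apply continuousOn_const
    exact this.congr (fun t _ => (hgradc' (x t) c i k))
  -- pointwise expansion of the integrand
  have hpt : ∀ t ∈ Set.Icc (0:ℝ) T, (∑ i, s (x t) c i * D (x t, c) i (G t, γ))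
      = (∑ j, hh j t * Gj j t) + ∑ k, qq k t * γ k := by
    intro t ht
    simp only [hDexp, mul_add, Finset.mul_sum, Finset.sum_add_distrib]
    congr 1
    · rw [Finset.sum_comm]
      refine Finset.sum_congr rfl fun j _ => ?_
      simp only [hhdef, Finset.sum_mul]
      refine Finset.sum_congr rfl fun i _ => ?_
      rw [hGapp j t ht]; ring
    · rw [Finset.sum_comm]
      refine Finset.sum_congr rfl fun k _ => ?_
      simp only [qqdef, Finset.sum_mul]
      refine Finset.sum_congr rfl fun i _ => ?_
      ring
  -- the three integral computations
  have hIfirst : (∫ t in (0:ℝ)..T, ∑ j, hh j t * Gj j t)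
      = ∑ j, ∫ t in (0:ℝ)..T, HH j t * g t j := by
    rw [intervalIntegral.integral_finset_sum (fun j _ => hII _ ((hhc j).fun_mul (hGjc j)))]
    exact Finset.sum_congr rfl fun j _ => hparts j
  have hIsecond : (∫ t in (0:ℝ)..T, ∑ k, qq k t * γ k)
      = ∑ k, (∑ i, ∫ t in (0:ℝ)..T, s (x t) c i * gradc (x t) c i k) * γ k := by
    rw [intervalIntegral.integral_finset_sum (fun k _ => hII _ ((hqc k).fun_mul continuousOn_const))]
    refine Finset.sum_congr rfl fun k _ => ?_
    rw [intervalIntegral.integral_mul_const]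
    congr 1
    rw [← intervalIntegral.integral_finset_sum
      (fun i _ => hII _ ((hsxc i).fun_mul (hgradcc i k)))]
  have hHHt : ∀ (j : Fin n), ∀ t ∈ Set.Icc (0:ℝ) T,
      (∑ i, ∫ τ in t..T, s (x τ) c i * gradx (x τ) c i j) = HH j t := by
    intro j t ht
    have hint : ∀ i ∈ Finset.univ,
        IntervalIntegrable (fun τ => s (x τ) c i * gradx (x τ) c i j) volume t T := by
      intro i _
      apply ContinuousOn.intervalIntegrable
      apply ((hsxc i).mul (hgradxc i j)).mono
      rw [Set.uIcc_of_le ht.2]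
      exact Set.Icc_subset_Icc ht.1 le_rfl
    rw [← intervalIntegral.integral_finset_sum hint]
  have hRHS1 : (∫ t in (0:ℝ)..T,
        ∑ j, (∑ i, ∫ τ in t..T, s (x τ) c i * gradx (x τ) c i j) * g t j)
      = ∑ j, ∫ t in (0:ℝ)..T, HH j t * g t j := by
    rw [intervalIntegral.integral_congr (g := fun t => ∑ j, HH j t * g t j)
      (fun t ht => by
        rw [huIcc] at ht
        exact Finset.sum_congr rfl fun j _ => by rw [hHHt j t ht])]
    exact intervalIntegral.integral_finset_sum (fun j _ => hII _ ((hHc j).mul (hgjc j)))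
  have hI : (∫ t in (0:ℝ)..T, ∑ i, s (x t) c i * D (x t, c) i (G t, γ))
      = (∫ t in (0:ℝ)..T,
          ∑ j, (∑ i, ∫ τ in t..T, s (x τ) c i * gradx (x τ) c i j) * g t j)
        + ∑ k, (∑ i, ∫ t in (0:ℝ)..T, s (x t) c i * gradc (x t) c i k) * γ k := by
    rw [intervalIntegral.integral_congr
      (g := fun t => (∑ j, hh j t * Gj j t) + ∑ k, qq k t * γ k)
      (fun t ht => hpt t (huIcc ▸ ht))]
    rw [intervalIntegral.integral_add
      (hII _ (continuousOn_finset_sum _ fun j _ => (hhc j).fun_mul (hGjc j)))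
      (hII _ (continuousOn_finset_sum _ fun k _ => (hqc k).fun_mul continuousOn_const))]
    rw [hIfirst, hIsecond, hRHS1]
  -- conclusion
  rw [hI] at main
  rw [hasDerivAt_iff_tendsto_slope] at main
  have hmono : nhdsWithin (0:ℝ) (Set.Ioi 0) ≤ nhdsWithin (0:ℝ) {(0:ℝ)}ᶜ :=
    nhdsWithin_mono 0 (fun a ha => ne_of_gt ha)
  refine Tendsto.congr ?_ (main.mono_left hmono)
  intro α
  rw [slope_def_field, sub_zero, ωid α, ωz]
  simp only [zero_smul, add_zero]
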